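/- Let X be a set, T : X → X a map, and h : X → 𝕋. For x, y ∈ X and p ∈ ℤ such that T^m(x) = T^n(y) for some m, n ∈ ℕ with m − n = p, define h̃(x,p,y) to be the common value of (∏_{i=0}^{N} h(T^i(x)))·(∏_{i=0}^{N−p} conj(h(T^i(y)))) for all sufficiently large N. Then h̃ is multiplicative: if T^m(x) = T^n(y) with m − n = p and T^a(y) = T^b(z) with a − b = q, then T^c(x) = T^d(z) for suitable c, d ∈ ℕ with c − d = p + q, and h̃(x,p,y)·h̃(y,q,z) = h̃(x,p+q,z). -/

import Mathlib

theorem stmt_14 {X : Type*} (T : X → X) (h : X → ℂ) (hmod : ∀ x : X, ‖h x‖ = 1)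
    (x y z : X) (p q : ℤ) (m n a b : ℕ)
    (hp : (m : ℤ) - (n : ℤ) = p) (hq : (a : ℤ) - (b : ℤ) = q)
    (hxy : T^[m] x = T^[n] y) (hyz : T^[a] y = T^[b] z) :
    (((m + a : ℕ) : ℤ) - ((n + b : ℕ) : ℤ) = p + q ∧ T^[m + a] x = T^[n + b] z) ∧
    (∀ v₁ v₂ v₃ : ℂ,
      (∀ᶠ N : ℕ in Filter.atTop,
        (∏ i ∈ Finset.range (N + 1), h (T^[i] x)) *
          (∏ i ∈ Finset.range (((N : ℤ) - p + 1).toNat),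
            (starRingEnd ℂ) (h (T^[i] y))) = v₁) →
      (∀ᶠ N : ℕ in Filter.atTop,
        (∏ i ∈ Finset.range (N + 1), h (T^[i] y)) *
          (∏ i ∈ Finset.range (((N : ℤ) - q + 1).toNat),
            (starRingEnd ℂ) (h (T^[i] z))) = v₂) →
      (∀ᶠ N : ℕ in Filter.atTop,
        (∏ i ∈ Finset.range (N + 1), h (T^[i] x)) *
          (∏ i ∈ Finset.range (((N : ℤ) - (p + q) + 1).toNat),
            (starRingEnd ℂ) (h (T^[i] z))) = v₃) →
      v₁ * v₂ = v₃) := by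
  constructor
  · refine ⟨by push_cast; omega, ?_⟩
    calc T^[m + a] x = T^[a] (T^[m] x) := by rw [Nat.add_comm, Function.iterate_add_apply]
      _ = T^[a] (T^[n] y) := by rw [hxy]
      _ = T^[n] (T^[a] y) := by
          rw [← Function.iterate_add_apply, ← Function.iterate_add_apply, Nat.add_comm]
      _ = T^[n] (T^[b] z) := by rw [hyz]
      _ = T^[n + b] z := (Function.iterate_add_apply T n b z).symm
  · intro v₁ v₂ v₃ h1 h2 h3
    rw [Filter.eventually_atTop] at h1 h2 h3
    obtain ⟨N₁, h1⟩ := h1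
    obtain ⟨N₂, h2⟩ := h2
    obtain ⟨N₃, h3⟩ := h3
    set N : ℕ := N₁ + N₃ + N₂ + p.toNat + q.toNat with hN
    have hNp : (N : ℤ) - p ≥ 0 := by
      have := Int.self_le_toNat p
      push_cast [hN]
      omega
    set M : ℕ := ((N : ℤ) - p).toNat with hM
    have hMZ : (M : ℤ) = (N : ℤ) - p := Int.toNat_of_nonneg hNp
    have hMN₂ : M ≥ N₂ := by
      have := Int.self_le_toNat p
      omega
    have e1 := h1 N (by omega)
    have e2 := h2 M hMN₂
    have e3 := h3 N (by omega)
    have ht1 : ((N : ℤ) - p + 1).toNat = M + 1 := by omega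
    have ht2 : ((M : ℤ) - q + 1).toNat = ((N : ℤ) - (p + q) + 1).toNat := by
      congr 1
      omega
    rw [ht1] at e1
    rw [ht2] at e2
    rw [← e1, ← e2, ← e3]
    have key : (∏ i ∈ Finset.range (M + 1), (starRingEnd ℂ) (h (T^[i] y))) *
        (∏ i ∈ Finset.range (M + 1), h (T^[i] y)) = 1 := by
      rw [← Finset.prod_mul_distrib]
      apply Finset.prod_eq_one
      intro i _
      rw [mul_comm, Complex.mul_conj, Complex.normSq_eq_norm_sq, hmod]
      norm_num
    calc (∏ i ∈ Finset.range (N + 1), h (T^[i] x)) *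
          (∏ i ∈ Finset.range (M + 1), (starRingEnd ℂ) (h (T^[i] y))) *
          ((∏ i ∈ Finset.range (M + 1), h (T^[i] y)) *
          (∏ i ∈ Finset.range (((N : ℤ) - (p + q) + 1).toNat), (starRingEnd ℂ) (h (T^[i] z))))
        = (∏ i ∈ Finset.range (N + 1), h (T^[i] x)) *
          (∏ i ∈ Finset.range (((N : ℤ) - (p + q) + 1).toNat), (starRingEnd ℂ) (h (T^[i] z))) *
          ((∏ i ∈ Finset.range (M + 1), (starRingEnd ℂ) (h (T^[i] y))) *
          (∏ i ∈ Finset.range (M + 1), h (T^[i] y))) := by ring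
      _ = _ := by rw [key, mul_one]
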